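/- Let A be a unital Banach algebra and x, y ∈ A with ‖x‖ ≤ M and ‖y‖ ≤ M for some M > 0. Then ‖exp(x+y) - exp(x)·exp(y)‖ ≤ C_M · ‖x*y - y*x‖, where C_M = ∑_{n=0}^∞ (n+1)·(n²/4)·M^{n-2} / ((⌊n/2⌋)!)² is a finite constant depending only on M. -/

import Mathlib

open NormedSpace Finset

section aux
variable {A : Type*} [NormedRing A] [NormedAlgebra ℝ A]

/-- norm of a * y^k bounded without NormOneClass -/
lemma aux_mul_pow_norm (M : ℝ) (y : A) (hy : ‖y‖ ≤ M) (a : A) :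
    ∀ k : ℕ, ‖a * y ^ k‖ ≤ ‖a‖ * M ^ k := by
  intro k
  cases k with
  | zero => simp
  | succ k =>
    calc ‖a * y ^ (k+1)‖ ≤ ‖a‖ * ‖y ^ (k+1)‖ := norm_mul_le _ _
    _ ≤ ‖a‖ * M ^ (k+1) := by
        refine mul_le_mul_of_nonneg_left ?_ (norm_nonneg a)
        exact (norm_pow_le' y k.succ_pos).trans (pow_le_pow_left₀ (norm_nonneg y) hy _)

lemma aux_comm_pow (M : ℝ) (hM : 0 < M) (x y : A) (hx : ‖x‖ ≤ M) :
    ∀ i : ℕ, ‖x ^ i * y - y * x ^ i‖ * M ≤ i * M ^ i * ‖x * y - y * x‖ := by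
  intro i
  induction i with
  | zero => simp [mul_nonneg (mul_nonneg (by norm_num : (0:ℝ) ≤ 0) hM.le) (norm_nonneg _)]
  | succ i ih =>
    have hid : x ^ (i+1) * y - y * x ^ (i+1)
        = x * (x ^ i * y - y * x ^ i) + (x * y - y * x) * x ^ i := by
      have h : x ^ (i+1) = x * x ^ i := pow_succ' x i
      rw [h]; noncomm_ring
    have h1 : ‖x * (x ^ i * y - y * x ^ i)‖ ≤ M * ‖x ^ i * y - y * x ^ i‖ :=
      (norm_mul_le _ _).trans (mul_le_mul_of_nonneg_right hx (norm_nonneg _))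
    have h2 : ‖(x * y - y * x) * x ^ i‖ ≤ ‖x * y - y * x‖ * M ^ i :=
      aux_mul_pow_norm M x hx _ i
    have := norm_add_le (x * (x ^ i * y - y * x ^ i)) ((x * y - y * x) * x ^ i)
    rw [← hid] at this
    have hMi : (0:ℝ) ≤ M ^ i := (pow_pos hM i).le
    calc ‖x ^ (i+1) * y - y * x ^ (i+1)‖ * M
        ≤ (M * ‖x ^ i * y - y * x ^ i‖ + ‖x * y - y * x‖ * M ^ i) * M := by
          apply mul_le_mul_of_nonneg_right _ hM.le
          exact this.trans (add_le_add h1 h2)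
      _ = M * (‖x ^ i * y - y * x ^ i‖ * M) + ‖x * y - y * x‖ * M ^ (i+1) := by ring
      _ ≤ M * (i * M ^ i * ‖x * y - y * x‖) + ‖x * y - y * x‖ * M ^ (i+1) := by
          exact add_le_add (mul_le_mul_of_nonneg_left ih hM.le) le_rfl
      _ = (i+1 : ℕ) * M ^ (i+1) * ‖x * y - y * x‖ := by push_cast; ring

end aux

noncomputable section aux2
variable {A : Type*} [NormedRing A] [NormedAlgebra ℝ A]

def auxP (x y : A) (n : ℕ) : A := ∑ i ∈ range (n+1), ((n.choose i : ℝ)) • (x ^ i * y ^ (n - i))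

lemma auxP_succ (x y : A) (n : ℕ) :
    auxP x y (n+1) = (∑ i ∈ range (n+1), (n.choose i : ℝ) • (x ^ (i+1) * y ^ (n-i)))
      + ∑ i ∈ range (n+1), (n.choose i : ℝ) • (x ^ i * y ^ (n+1-i)) := by
  rw [auxP, Finset.sum_range_succ' _ (n+1)]
  simp only [Nat.choose_succ_succ, Nat.cast_add, add_smul, Finset.sum_add_distrib,
    Nat.succ_sub_succ_eq_sub, Nat.choose_zero_right, Nat.cast_one, one_smul, pow_zero,
    one_mul, Nat.sub_zero]
  have h2 : ∑ i ∈ range (n+1), (n.choose (i+1) : ℝ) • (x ^ (i+1) * y ^ (n-i)) + y ^ (n+1)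
      = ∑ i ∈ range (n+1), (n.choose i : ℝ) • (x ^ i * y ^ (n+1-i)) := by
    rw [Finset.sum_range_succ (fun i => (n.choose (i+1) : ℝ) • (x ^ (i+1) * y ^ (n-i))) n,
      Finset.sum_range_succ' (fun i => (n.choose i : ℝ) • (x ^ i * y ^ (n+1-i))) n]
    simp [Nat.succ_sub_succ_eq_sub]
  simp only [Nat.succ_eq_add_one]
  rw [add_assoc, h2]

lemma aux_mulP (x y : A) (n : ℕ) :
    (x + y) * auxP x y n
      = auxP x y (n+1)
        - ∑ i ∈ range (n+1), (n.choose i : ℝ) • ((x^i*y - y*x^i) * y^(n-i)) := by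
  rw [eq_sub_iff_add_eq, auxP_succ]
  have key1 : ∀ i ∈ range (n+1),
      x * ((n.choose i : ℝ) • (x ^ i * y ^ (n-i)))
        = (n.choose i : ℝ) • (x ^ (i+1) * y ^ (n-i)) := by
    intro i _
    rw [mul_smul_comm, pow_succ', mul_assoc]
  have key2 : ∀ i ∈ range (n+1),
      y * ((n.choose i : ℝ) • (x ^ i * y ^ (n-i)))
          + (n.choose i : ℝ) • ((x ^ i * y - y * x ^ i) * y ^ (n-i))
        = (n.choose i : ℝ) • (x ^ i * y ^ (n+1-i)) := by
    intro i hi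
    have hle : i ≤ n := Nat.lt_succ_iff.mp (Finset.mem_range.mp hi)
    have hni : n + 1 - i = (n - i) + 1 := by omega
    rw [hni, mul_smul_comm, ← smul_add]
    congr 1
    rw [pow_succ' (y) (n - i)]
    noncomm_ring
  calc (x + y) * auxP x y n
        + ∑ i ∈ range (n+1), (n.choose i : ℝ) • ((x^i*y - y*x^i) * y^(n-i))
      = ∑ i ∈ range (n+1), x * ((n.choose i : ℝ) • (x ^ i * y ^ (n-i)))
        + ∑ i ∈ range (n+1), (y * ((n.choose i : ℝ) • (x ^ i * y ^ (n-i)))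
            + (n.choose i : ℝ) • ((x^i*y - y*x^i) * y^(n-i))) := by
        rw [auxP, add_mul, Finset.mul_sum, Finset.mul_sum, Finset.sum_add_distrib]; abel
    _ = _ := by rw [Finset.sum_congr rfl key1, Finset.sum_congr rfl key2]

end aux2

section aux3
variable {A : Type*} [NormedRing A] [NormedAlgebra ℝ A]

lemma aux_R_bound (M : ℝ) (hM : 0 < M) (x y : A) (hx : ‖x‖ ≤ M) (hy : ‖y‖ ≤ M) (n : ℕ) :
    ‖∑ i ∈ range (n+1), (n.choose i : ℝ) • ((x^i*y - y*x^i) * y^(n-i))‖ * M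
      ≤ (n:ℝ) * 2^n * M^n * ‖x*y - y*x‖ := by
  have termbound : ∀ i ∈ range (n+1),
      ‖(n.choose i : ℝ) • ((x^i*y - y*x^i) * y^(n-i))‖ * M
        ≤ (n.choose i : ℝ) * ((n:ℝ) * M^n * ‖x*y - y*x‖) := by
    intro i hi
    have hle : i ≤ n := Nat.lt_succ_iff.mp (Finset.mem_range.mp hi)
    have h1 : ‖(x^i*y - y*x^i) * y^(n-i)‖ ≤ ‖x^i*y - y*x^i‖ * M^(n-i) :=
      aux_mul_pow_norm M y hy _ _
    have h2 : ‖x^i*y - y*x^i‖ * M ≤ i * M^i * ‖x*y - y*x‖ := aux_comm_pow M hM x y hx i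
    have h3 : (‖x^i*y - y*x^i‖ * M^(n-i)) * M ≤ (i : ℝ) * M^n * ‖x*y - y*x‖ := by
      have : (‖x^i*y - y*x^i‖ * M^(n-i)) * M = (‖x^i*y - y*x^i‖ * M) * M^(n-i) := by ring
      rw [this]
      calc (‖x^i*y - y*x^i‖ * M) * M^(n-i) ≤ (i * M^i * ‖x*y - y*x‖) * M^(n-i) :=
            mul_le_mul_of_nonneg_right h2 (pow_pos hM _).le
        _ = (i:ℝ) * (M^i * M^(n-i)) * ‖x*y - y*x‖ := by ring
        _ = (i:ℝ) * M^n * ‖x*y - y*x‖ := by rw [← pow_add, Nat.add_sub_cancel' hle]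
    calc ‖(n.choose i : ℝ) • ((x^i*y - y*x^i) * y^(n-i))‖ * M
        = (n.choose i : ℝ) * ((‖(x^i*y - y*x^i) * y^(n-i)‖) * M) := by
          rw [norm_smul, Real.norm_natCast]; ring
      _ ≤ (n.choose i : ℝ) * (((i:ℝ)) * M^n * ‖x*y - y*x‖) := by
          refine mul_le_mul_of_nonneg_left ?_ (Nat.cast_nonneg _)
          exact (mul_le_mul_of_nonneg_right h1 hM.le).trans h3
      _ ≤ (n.choose i : ℝ) * ((n:ℝ) * M^n * ‖x*y - y*x‖) := by
          refine mul_le_mul_of_nonneg_left ?_ (Nat.cast_nonneg _)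
          refine mul_le_mul_of_nonneg_right (mul_le_mul_of_nonneg_right ?_ (pow_pos hM _).le)
            (norm_nonneg _)
          exact_mod_cast Nat.cast_le.mpr hle
  calc ‖∑ i ∈ range (n+1), (n.choose i : ℝ) • ((x^i*y - y*x^i) * y^(n-i))‖ * M
      ≤ (∑ i ∈ range (n+1), ‖(n.choose i : ℝ) • ((x^i*y - y*x^i) * y^(n-i))‖) * M :=
        mul_le_mul_of_nonneg_right (norm_sum_le _ _) hM.le
    _ = ∑ i ∈ range (n+1), ‖(n.choose i : ℝ) • ((x^i*y - y*x^i) * y^(n-i))‖ * M :=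
        Finset.sum_mul ..
    _ ≤ ∑ i ∈ range (n+1), (n.choose i : ℝ) * ((n:ℝ) * M^n * ‖x*y - y*x‖) :=
        Finset.sum_le_sum termbound
    _ = (∑ i ∈ range (n+1), (n.choose i : ℝ)) * ((n:ℝ) * M^n * ‖x*y - y*x‖) :=
        (Finset.sum_mul ..).symm
    _ = (n:ℝ) * 2^n * M^n * ‖x*y - y*x‖ := by
        have : (∑ i ∈ range (n+1), (n.choose i : ℝ)) = 2^n := by
          exact_mod_cast congrArg (Nat.cast : ℕ → ℝ) (Nat.sum_range_choose n)
        rw [this]; ring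

lemma aux_key (M : ℝ) (hM : 0 < M) (x y : A) (hx : ‖x‖ ≤ M) (hy : ‖y‖ ≤ M) :
    ∀ n : ℕ, ‖(x+y)^n - auxP x y n‖ * M^2
      ≤ (2*M)^n * ((n:ℝ)*((n:ℝ)-1)/4) * ‖x*y - y*x‖ := by
  intro n
  induction n with
  | zero => simp [auxP]
  | succ n ih =>
    have hE : (x+y)^(n+1) - auxP x y (n+1)
        = (x+y) * ((x+y)^n - auxP x y n)
          - ∑ i ∈ range (n+1), (n.choose i : ℝ) • ((x^i*y - y*x^i) * y^(n-i)) := by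
      rw [mul_sub, aux_mulP, pow_succ']; abel
    have hxy : ‖x + y‖ ≤ 2*M := by
      calc ‖x + y‖ ≤ ‖x‖ + ‖y‖ := norm_add_le x y
        _ ≤ 2*M := by linarith
    have hnorm : ‖(x+y)^(n+1) - auxP x y (n+1)‖
        ≤ 2*M * ‖(x+y)^n - auxP x y n‖
          + ‖∑ i ∈ range (n+1), (n.choose i : ℝ) • ((x^i*y - y*x^i) * y^(n-i))‖ := by
      rw [hE]
      refine (norm_sub_le _ _).trans (add_le_add ?_ le_rfl)
      exact (norm_mul_le _ _).trans (mul_le_mul_of_nonneg_right hxy (norm_nonneg _))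
    have hR := aux_R_bound M hM x y hx hy n
    have hM2 : (0:ℝ) ≤ M^2 := (pow_pos hM 2).le
    calc ‖(x+y)^(n+1) - auxP x y (n+1)‖ * M^2
        ≤ (2*M * ‖(x+y)^n - auxP x y n‖
            + ‖∑ i ∈ range (n+1), (n.choose i : ℝ) • ((x^i*y - y*x^i) * y^(n-i))‖) * M^2 :=
          mul_le_mul_of_nonneg_right hnorm hM2
      _ = 2*M * (‖(x+y)^n - auxP x y n‖ * M^2)
            + (‖∑ i ∈ range (n+1), (n.choose i : ℝ) • ((x^i*y - y*x^i) * y^(n-i))‖ * M) * M := by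
          ring
      _ ≤ 2*M * ((2*M)^n * ((n:ℝ)*((n:ℝ)-1)/4) * ‖x*y - y*x‖)
            + ((n:ℝ) * 2^n * M^n * ‖x*y - y*x‖) * M := by
          exact add_le_add (mul_le_mul_of_nonneg_left ih (by linarith))
            (mul_le_mul_of_nonneg_right hR hM.le)
      _ = (2*M)^(n+1) * ((↑(n+1):ℝ)*((↑(n+1):ℝ)-1)/4) * ‖x*y - y*x‖ := by
          push_cast; ring
end aux3

lemma aux_natA (n : ℕ) : n.factorial ≤ 2^n * (n+1) * ((n/2).factorial)^2 := by
  have h0 : n/2 ≤ n := Nat.div_le_self n 2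
  have h1 : (n.choose (n/2)) * (n/2).factorial * (n - n/2).factorial = n.factorial :=
    Nat.choose_mul_factorial_mul_factorial h0
  have h2 : n.choose (n/2) ≤ 2^n := by
    calc n.choose (n/2) ≤ ∑ i ∈ range (n+1), n.choose i :=
          Finset.single_le_sum (f := fun i => n.choose i) (fun i _ => Nat.zero_le _)
            (Finset.mem_range.mpr (Nat.lt_succ_of_le h0))
      _ = 2^n := Nat.sum_range_choose n
  have h3 : (n - n/2).factorial ≤ (n+1) * (n/2).factorial := by
    have : n - n/2 ≤ n/2 + 1 := by omega
    calc (n - n/2).factorial ≤ (n/2 + 1).factorial := Nat.factorial_le this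
      _ = (n/2 + 1) * (n/2).factorial := Nat.factorial_succ _
      _ ≤ (n+1) * (n/2).factorial := Nat.mul_le_mul_right _ (by omega)
  calc n.factorial = (n.choose (n/2)) * (n/2).factorial * (n - n/2).factorial := h1.symm
    _ ≤ 2^n * (n/2).factorial * ((n+1) * (n/2).factorial) :=
        Nat.mul_le_mul (Nat.mul_le_mul_right _ h2) h3
    _ = 2^n * (n+1) * ((n/2).factorial)^2 := by ring

lemma aux_natB (n : ℕ) : 2^n * ((n/2).factorial)^2 ≤ (n+1) * n.factorial := by
  have h0 : n/2 ≤ n := Nat.div_le_self n 2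
  have h1 : (n.choose (n/2)) * (n/2).factorial * (n - n/2).factorial = n.factorial :=
    Nat.choose_mul_factorial_mul_factorial h0
  have h2 : 2^n ≤ (n+1) * n.choose (n/2) := by
    calc 2^n = ∑ i ∈ range (n+1), n.choose i := (Nat.sum_range_choose n).symm
      _ ≤ (n+1) * n.choose (n/2) := by
          have := Finset.sum_le_card_nsmul (range (n+1)) (fun i => n.choose i)
            (n.choose (n/2)) (fun i _ => Nat.choose_le_middle i n)
          simpa [smul_eq_mul] using this
  have h3 : (n/2).factorial ≤ (n - n/2).factorial := Nat.factorial_le (by omega)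
  calc 2^n * ((n/2).factorial)^2 ≤ ((n+1) * n.choose (n/2)) * ((n/2).factorial * (n - n/2).factorial) := by
        rw [pow_two]
        exact Nat.mul_le_mul h2 (Nat.mul_le_mul_left _ h3)
    _ = (n+1) * (n.choose (n/2) * (n/2).factorial * (n - n/2).factorial) := by ring
    _ = (n+1) * n.factorial := by rw [h1]

lemma aux_natC (n : ℕ) : n*(n+1) ≤ 2^(n+1) := by
  induction n with
  | zero => simp
  | succ n ih =>
    have h1 : n + 1 ≤ 2^n := Nat.lt_two_pow_self
    calc (n+1)*(n+1+1) = n*(n+1) + 2*(n+1) := by ring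
      _ ≤ 2^(n+1) + 2*2^n := Nat.add_le_add ih (Nat.mul_le_mul_left 2 h1)
      _ = 2^(n+1+1) := by rw [pow_succ, pow_succ]; ring

/-- For `x, y` in a unital Banach algebra with `‖x‖, ‖y‖ ≤ M`,
`‖exp(x+y) - exp x · exp y‖ ≤ C_M · ‖xy - yx‖` where
`C_M = ∑_{n=0}^∞ (n+1)·(n²/4)·M^{n-2} / ((⌊n/2⌋)!)²`. -/
theorem exp_sum_sub_exp_mul_exp_norm_le {A : Type*} [NormedRing A] [NormedAlgebra ℝ A]
    [CompleteSpace A] (M : ℝ) (hM : 0 < M) (x y : A) (hx : ‖x‖ ≤ M) (hy : ‖y‖ ≤ M) :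
    ‖exp (x + y) - exp x * exp y‖ ≤
      (∑' n : ℕ, ((n : ℝ) + 1) * ((n : ℝ) ^ 2 / 4) * M ^ ((n : ℤ) - 2) /
        ((Nat.factorial (n / 2) : ℝ)) ^ 2) * ‖x * y - y * x‖ := by
  set c := x * y - y * x with hc_def
  set cn : ℕ → ℝ := fun n => ((n : ℝ) + 1) * ((n : ℝ) ^ 2 / 4) * M ^ ((n : ℤ) - 2) /
      ((Nat.factorial (n / 2) : ℝ)) ^ 2 with hcn_def
  set S : ℕ → A := fun n => ((n.factorial : ℝ))⁻¹ • (x + y) ^ n with hS_def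
  set T : ℕ → A := fun n => ((n.factorial : ℝ))⁻¹ • auxP x y n with hT_def
  have hMz : ∀ n : ℕ, M ^ ((n : ℤ) - 2) = M ^ n / M ^ 2 := by
    intro n
    rw [zpow_sub₀ hM.ne', zpow_natCast, show ((2:ℤ)) = ((2:ℕ):ℤ) by norm_num, zpow_natCast]
  have hfn : Summable fun n : ℕ => ‖((n.factorial : ℝ))⁻¹ • x ^ n‖ :=
    norm_expSeries_summable' (𝕂 := ℝ) x
  have hgn : Summable fun n : ℕ => ‖((n.factorial : ℝ))⁻¹ • y ^ n‖ :=
    norm_expSeries_summable' (𝕂 := ℝ) y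
  -- Cauchy product terms equal T
  have hT : ∀ n : ℕ, (∑ k ∈ range (n+1),
      (((k.factorial : ℝ))⁻¹ • x ^ k) * (((n-k).factorial : ℝ))⁻¹ • y ^ (n-k)) = T n := by
    intro n
    rw [hT_def]
    simp only
    rw [auxP, Finset.smul_sum]
    refine Finset.sum_congr rfl ?_
    intro k hk
    have hkn : k ≤ n := Nat.lt_succ_iff.mp (Finset.mem_range.mp hk)
    rw [smul_mul_smul_comm, smul_smul]
    congr 1
    have hfac : (n.choose k) * k.factorial * (n-k).factorial = n.factorial :=
      Nat.choose_mul_factorial_mul_factorial hkn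
    have h1 : ((k.factorial : ℝ)) ≠ 0 := Nat.cast_ne_zero.mpr k.factorial_ne_zero
    have h2 : (((n-k).factorial : ℝ)) ≠ 0 := Nat.cast_ne_zero.mpr (n-k).factorial_ne_zero
    have h3 : ((n.factorial : ℝ)) ≠ 0 := Nat.cast_ne_zero.mpr n.factorial_ne_zero
    field_simp
    rw [mul_assoc] at hfac
    have h4 := congrArg (Nat.cast : ℕ → ℝ) hfac.symm
    push_cast at h4
    linear_combination h4
  -- pointwise estimate
  have hST : ∀ n : ℕ, ‖S n - T n‖ ≤ cn n * ‖c‖ := by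
    intro n
    have hd0 : (0:ℝ) < (((n/2).factorial : ℝ))^2 := by positivity
    have hf0 : (0:ℝ) < ((n.factorial : ℝ)) := by exact_mod_cast n.factorial_pos
    have hkey := aux_key M hM x y hx hy n
    have h1 : ‖(x+y)^n - auxP x y n‖ ≤ (2*M)^n * ((n:ℝ)*((n:ℝ)-1)/4) * ‖c‖ / M^2 :=
      (le_div_iff₀ (by positivity)).mpr hkey
    have h2 : ‖S n - T n‖ = ((n.factorial : ℝ))⁻¹ * ‖(x+y)^n - auxP x y n‖ := by
      rw [hS_def, hT_def]
      simp only
      rw [← smul_sub, norm_smul, norm_inv, Real.norm_natCast]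
    have hB : (2:ℝ)^n * (((n/2).factorial : ℝ))^2 ≤ ((n:ℝ)+1) * ((n.factorial : ℝ)) := by
      exact_mod_cast aux_natB n
    have key3 : (2*M)^n * ((n:ℝ)*((n:ℝ)-1)/4) * (((n/2).factorial : ℝ))^2
        ≤ ((n:ℝ)+1) * ((n:ℝ)^2/4) * M^n * ((n.factorial : ℝ)) := by
      have hq : (n:ℝ)*((n:ℝ)-1)/4 ≤ (n:ℝ)^2/4 := by nlinarith [Nat.cast_nonneg (α := ℝ) n]
      have hq0 : (0:ℝ) ≤ (n:ℝ)^2/4 := by positivity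
      calc (2*M)^n * ((n:ℝ)*((n:ℝ)-1)/4) * (((n/2).factorial : ℝ))^2
          = ((n:ℝ)*((n:ℝ)-1)/4) * ((2:ℝ)^n * (((n/2).factorial : ℝ))^2) * M^n := by
            rw [mul_pow]; ring
        _ ≤ ((n:ℝ)^2/4) * (((n:ℝ)+1) * ((n.factorial : ℝ))) * M^n := by
            refine mul_le_mul_of_nonneg_right ?_ (pow_pos hM n).le
            exact mul_le_mul hq hB (by positivity) hq0
        _ = ((n:ℝ)+1) * ((n:ℝ)^2/4) * M^n * ((n.factorial : ℝ)) := by ring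
    calc ‖S n - T n‖ = ((n.factorial : ℝ))⁻¹ * ‖(x+y)^n - auxP x y n‖ := h2
      _ ≤ ((n.factorial : ℝ))⁻¹ * ((2*M)^n * ((n:ℝ)*((n:ℝ)-1)/4) * ‖c‖ / M^2) :=
          mul_le_mul_of_nonneg_left h1 (by positivity)
      _ = ((2*M)^n * ((n:ℝ)*((n:ℝ)-1)/4) * (((n/2).factorial : ℝ))^2 /
            ((((n/2).factorial : ℝ))^2 * M^2 * ((n.factorial : ℝ)))) * ‖c‖ := by
          field_simp
      _ ≤ (((n:ℝ)+1) * ((n:ℝ)^2/4) * M^n * ((n.factorial : ℝ)) /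
            ((((n/2).factorial : ℝ))^2 * M^2 * ((n.factorial : ℝ)))) * ‖c‖ := by
          gcongr
      _ = cn n * ‖c‖ := by
          rw [hcn_def]
          simp only
          rw [hMz n]
          congr 1
          field_simp
  -- summability of cn
  have hcn_nonneg : ∀ n, 0 ≤ cn n := by
    intro n
    rw [hcn_def]
    simp only
    have hz : (0:ℝ) < M ^ ((n : ℤ) - 2) := zpow_pos hM _
    positivity
  have hcn_le : ∀ n : ℕ, cn n ≤ M⁻¹^2 * ((8*(M+1))^n / (n.factorial : ℝ)) := by
    intro n
    have hd0 : (0:ℝ) < (((n/2).factorial : ℝ))^2 := by positivity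
    have hf0 : (0:ℝ) < ((n.factorial : ℝ)) := by exact_mod_cast n.factorial_pos
    have hA : ((n.factorial : ℝ)) ≤ 2^n * ((n:ℝ)+1) * (((n/2).factorial : ℝ))^2 := by
      exact_mod_cast aux_natA n
    have hC : ((n:ℝ) * ((n:ℝ)+1))^2 ≤ 4 * 4^n := by
      have h' : ((n:ℝ) * ((n:ℝ)+1)) ≤ 2 * 2^n := by
        have h2 := (Nat.cast_le (α := ℝ)).mpr (aux_natC n)
        push_cast at h2
        rw [pow_succ] at h2
        linarith
      have hnn : (0:ℝ) ≤ (n:ℝ) * ((n:ℝ)+1) := by positivity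
      have h2n : (0:ℝ) ≤ 2 * 2^n := by positivity
      calc ((n:ℝ) * ((n:ℝ)+1))^2 ≤ (2 * 2^n)^2 := by nlinarith
        _ = 4 * 4^n := by
            rw [mul_pow, ← pow_mul, show (4:ℝ) = 2^2 by norm_num, ← pow_mul]
            ring
    have hMn : M^n ≤ (M+1)^n := pow_le_pow_left₀ hM.le (by linarith) n
    have key : ((n:ℝ)+1) * ((n:ℝ)^2/4) * M^n * ((n.factorial : ℝ))
        ≤ (8*(M+1))^n * (((n/2).factorial : ℝ))^2 := by
      have hMn0 : (0:ℝ) < M^n := pow_pos hM n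
      calc ((n:ℝ)+1) * ((n:ℝ)^2/4) * M^n * ((n.factorial : ℝ))
          ≤ ((n:ℝ)+1) * ((n:ℝ)^2/4) * M^n * (2^n * ((n:ℝ)+1) * (((n/2).factorial : ℝ))^2) := by
            refine mul_le_mul_of_nonneg_left hA (by positivity)
        _ = (((n:ℝ) * ((n:ℝ)+1))^2/4) * (2^n * M^n) * (((n/2).factorial : ℝ))^2 := by ring
        _ ≤ ((4 * 4^n)/4) * (2^n * (M+1)^n) * (((n/2).factorial : ℝ))^2 := by
            refine mul_le_mul_of_nonneg_right ?_ hd0.le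
            refine mul_le_mul (by linarith) ?_ (by positivity) (by positivity)
            exact mul_le_mul_of_nonneg_left hMn (by positivity)
        _ = (8*(M+1))^n * (((n/2).factorial : ℝ))^2 := by
            rw [show (8:ℝ)*(M+1) = 4*(2*(M+1)) by ring, mul_pow, mul_pow]
            ring
    rw [hcn_def]
    simp only
    rw [hMz n, show M⁻¹^2 * ((8*(M+1))^n / (n.factorial : ℝ))
        = (M⁻¹^2 * (8*(M+1))^n) / (n.factorial : ℝ) by ring,
      div_le_div_iff₀ hd0 hf0]
    calc ((n:ℝ)+1) * ((n:ℝ)^2/4) * (M^n / M^2) * ((n.factorial : ℝ))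
        = (((n:ℝ)+1) * ((n:ℝ)^2/4) * M^n * ((n.factorial : ℝ))) * M⁻¹^2 := by
          field_simp
      _ ≤ ((8*(M+1))^n * (((n/2).factorial : ℝ))^2) * M⁻¹^2 :=
          mul_le_mul_of_nonneg_right key (by positivity)
      _ = M⁻¹^2 * (8*(M+1))^n * (((n/2).factorial : ℝ))^2 := by ring
  have hc_sum : Summable cn := by
    refine Summable.of_nonneg_of_le hcn_nonneg hcn_le ?_
    exact (Real.summable_pow_div_factorial (8*(M+1))).mul_left _
  -- assembling
  have hSsum : Summable S := expSeries_summable' (𝕂 := ℝ) (x + y)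
  have hdiff : Summable (fun n => ‖S n - T n‖) :=
    Summable.of_nonneg_of_le (fun n => norm_nonneg _) hST (hc_sum.mul_right ‖c‖)
  have hSTsum : Summable (fun n => S n - T n) := hdiff.of_norm
  have hTsum : Summable T := by
    have h := hSsum.sub hSTsum
    simpa using h
  have hexp : exp (x + y) - exp x * exp y = ∑' n, (S n - T n) := by
    rw [exp_eq_tsum (𝕂 := ℝ), tsum_mul_tsum_eq_tsum_sum_range_of_summable_norm hfn hgn,
      tsum_congr hT, ← Summable.tsum_sub hSsum hTsum]
  rw [hexp]
  calc ‖∑' n, (S n - T n)‖ ≤ ∑' n, ‖S n - T n‖ := norm_tsum_le_tsum_norm hdiff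
    _ ≤ ∑' n, cn n * ‖c‖ := Summable.tsum_le_tsum hST hdiff (hc_sum.mul_right _)
    _ = (∑' n, cn n) * ‖c‖ := tsum_mul_right
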